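/- Let K ≥ 1 and p ≥ 1. Let Ψ_1, …, Ψ_K be real symmetric p×p matrices and 0 < λ_1 ≤ λ_2 be such that λ_1 ‖v‖² ≤ vᵀ Ψ_k v ≤ λ_2 ‖v‖² for every k ∈ {1,…,K} and every v ∈ ℝ^p, where ‖·‖ is the Euclidean norm. Let β_1, …, β_K, β_0 ∈ ℝ^p, set S = ∑_{k=1}^K Ψ_k and β_DSE = S⁻¹(∑_{k=1}^K Ψ_k β_k). Then ‖β_DSE − β_0‖ ≤ (λ_2/λ_1) · max_{1≤k≤K} ‖β_k − β_0‖. -/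

import Mathlib

open Matrix Finset

lemma dse_dot_eq_inner {p : ℕ} (x y : EuclideanSpace ℝ (Fin p)) :
    (x : Fin p → ℝ) ⬝ᵥ (y : Fin p → ℝ) = inner ℝ x y := by
  simp [PiLp.inner_apply, dotProduct, RCLike.inner_apply, mul_comm]

lemma dse_symm_dot {p : ℕ} (A : Matrix (Fin p) (Fin p) ℝ) (hA : A.IsSymm)
    (v w : Fin p → ℝ) : v ⬝ᵥ A.mulVec w = w ⬝ᵥ A.mulVec v := by
  rw [dotProduct_mulVec, ← mulVec_transpose, hA.eq, dotProduct_comm]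

lemma dse_cs {p : ℕ} (A : Matrix (Fin p) (Fin p) ℝ) (hA : A.IsSymm)
    (hpos : ∀ v : Fin p → ℝ, 0 ≤ v ⬝ᵥ A.mulVec v) (v w : Fin p → ℝ) :
    (v ⬝ᵥ A.mulVec w) ^ 2 ≤ (v ⬝ᵥ A.mulVec v) * (w ⬝ᵥ A.mulVec w) := by
  have key : discrim (w ⬝ᵥ A.mulVec w) (2 * (v ⬝ᵥ A.mulVec w)) (v ⬝ᵥ A.mulVec v) ≤ 0 := by
    apply discrim_le_zero
    intro t
    have h := hpos (v + t • w)
    have expand : (v + t • w) ⬝ᵥ A.mulVec (v + t • w)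
        = (w ⬝ᵥ A.mulVec w) * (t * t) + 2 * (v ⬝ᵥ A.mulVec w) * t + v ⬝ᵥ A.mulVec v := by
      simp only [mulVec_add, mulVec_smul, add_dotProduct, smul_dotProduct,
        dotProduct_add, dotProduct_smul, smul_eq_mul, dse_symm_dot A hA w v]
      ring
    rw [expand] at h
    linarith
  rw [discrim] at key
  nlinarith [key]

lemma dse_norm_sq_eq_dot {p : ℕ} (x : EuclideanSpace ℝ (Fin p)) :
    ‖x‖ ^ 2 = (x : Fin p → ℝ) ⬝ᵥ (x : Fin p → ℝ) := by
  rw [dse_dot_eq_inner, real_inner_self_eq_norm_sq]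

lemma dse_op_bound {p : ℕ} (A : Matrix (Fin p) (Fin p) ℝ) (hA : A.IsSymm) (b : ℝ)
    (hb : 0 ≤ b)
    (hpos : ∀ v : Fin p → ℝ, 0 ≤ v ⬝ᵥ A.mulVec v)
    (hub : ∀ v : EuclideanSpace ℝ (Fin p),
      (v : Fin p → ℝ) ⬝ᵥ A.mulVec v ≤ b * ‖v‖ ^ 2)
    (v u : EuclideanSpace ℝ (Fin p)) (huv : (u : Fin p → ℝ) = A.mulVec v) :
    ‖u‖ ≤ b * ‖v‖ := by
  have husq : ‖u‖ ^ 2 = (v : Fin p → ℝ) ⬝ᵥ A.mulVec u :=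
    calc ‖u‖ ^ 2 = (u : Fin p → ℝ) ⬝ᵥ (u : Fin p → ℝ) := dse_norm_sq_eq_dot u
      _ = (u : Fin p → ℝ) ⬝ᵥ A.mulVec v := by rw [huv]
      _ = (v : Fin p → ℝ) ⬝ᵥ A.mulVec u := dse_symm_dot A hA u v
  have hcs := dse_cs A hA hpos v u
  have h1 := hub v
  have h2 := hub u
  have hn4 : (‖u‖ ^ 2) ^ 2 ≤ (b * ‖v‖ ^ 2) * (b * ‖u‖ ^ 2) := by
    conv_lhs => rw [husq]
    exact le_trans hcs (mul_le_mul h1 h2 (hpos u) (le_trans (hpos v) h1))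
  have hy : 0 ≤ b * ‖v‖ := mul_nonneg hb (norm_nonneg v)
  rcases eq_or_lt_of_le (norm_nonneg u) with h0 | h0
  · linarith
  · have h5 : ‖u‖ ^ 2 ≤ (b * ‖v‖) ^ 2 := by
      nlinarith [hn4, mul_pos h0 h0]
    exact le_of_pow_le_pow_left₀ two_ne_zero hy h5

lemma dse_sum_mulVec {K p : ℕ} (Ψ : Fin K → Matrix (Fin p) (Fin p) ℝ) (y : Fin p → ℝ) :
    (∑ k, Ψ k).mulVec y = ∑ k, (Ψ k).mulVec y := by
  funext i
  simp only [mulVec, dotProduct, Matrix.sum_apply, Finset.sum_apply, Finset.sum_mul]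
  rw [Finset.sum_comm]

lemma dse_dot_sum {K p : ℕ} (v : Fin p → ℝ) (u : Fin K → (Fin p → ℝ)) :
    v ⬝ᵥ (∑ k, u k) = ∑ k, v ⬝ᵥ u k := by
  simp only [dotProduct, Finset.sum_apply, Finset.mul_sum]
  rw [Finset.sum_comm]

/-- Quantitative deterministic version of Theorem 2: under the two-sided
bounds `λ₁‖v‖² ≤ vᵀΨₖv ≤ λ₂‖v‖²`, the distributed subsample estimator
`β_DSE = S⁻¹ ∑ₖ Ψₖ βₖ` (with `S = ∑ₖ Ψₖ`) satisfies
`‖β_DSE − β₀‖ ≤ (λ₂/λ₁) · maxₖ ‖βₖ − β₀‖`. -/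
theorem dse_error_le_condition_ratio_mul_max
    (K p : ℕ) (hK : 1 ≤ K) (hp : 1 ≤ p)
    (Ψ : Fin K → Matrix (Fin p) (Fin p) ℝ)
    (hΨsymm : ∀ k, (Ψ k).IsSymm)
    (l₁ l₂ : ℝ) (hl₁ : 0 < l₁) (hl₁₂ : l₁ ≤ l₂)
    (hbd : ∀ (k : Fin K) (v : EuclideanSpace ℝ (Fin p)),
      l₁ * ‖v‖ ^ 2 ≤ v ⬝ᵥ (Ψ k).mulVec v ∧ v ⬝ᵥ (Ψ k).mulVec v ≤ l₂ * ‖v‖ ^ 2)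
    (β : Fin K → EuclideanSpace ℝ (Fin p)) (β₀ : EuclideanSpace ℝ (Fin p))
    (S : Matrix (Fin p) (Fin p) ℝ) (hS : S = ∑ k, Ψ k)
    (βDSE : EuclideanSpace ℝ (Fin p))
    (hβDSE : βDSE = S⁻¹.mulVec (∑ k, (Ψ k).mulVec (β k))) :
    ‖βDSE - β₀‖ ≤
      (l₂ / l₁) * Finset.univ.sup' ⟨⟨0, hK⟩, Finset.mem_univ _⟩
        (fun k => ‖β k - β₀‖) := by
  -- lower bound on the quadratic form of S
  have hSlow : ∀ v : EuclideanSpace ℝ (Fin p),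
      (K : ℝ) * l₁ * ‖v‖ ^ 2 ≤ (v : Fin p → ℝ) ⬝ᵥ S.mulVec v := by
    intro v
    have hexp : (v : Fin p → ℝ) ⬝ᵥ S.mulVec v
        = ∑ k, (v : Fin p → ℝ) ⬝ᵥ (Ψ k).mulVec v := by
      rw [hS, dse_sum_mulVec, dse_dot_sum]
    rw [hexp]
    calc (K : ℝ) * l₁ * ‖v‖ ^ 2 = ∑ _k : Fin K, l₁ * ‖v‖ ^ 2 := by
          simp [mul_assoc]
      _ ≤ ∑ k, (v : Fin p → ℝ) ⬝ᵥ (Ψ k).mulVec v :=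
          Finset.sum_le_sum fun k _ => (hbd k v).1
  have hKpos : (0 : ℝ) < (K : ℝ) * l₁ := by
    have hK0 : (0 : ℝ) < (K : ℝ) := by
      exact_mod_cast Nat.lt_of_lt_of_le Nat.zero_lt_one hK
    exact mul_pos hK0 hl₁
  -- S is invertible
  have hSinj : Function.Injective S.mulVec := by
    intro a b hab
    have h0 : S.mulVec (a - b) = 0 := by
      rw [mulVec_sub, hab, sub_self]
    have key : ∀ d : EuclideanSpace ℝ (Fin p),
        S.mulVec (d : Fin p → ℝ) = 0 → d = 0 := by
      intro d hd0
      have hd := hSlow d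
      rw [hd0, dotProduct_zero] at hd
      have hs0 : ‖d‖ ^ 2 ≤ 0 := by
        have h1 : (K : ℝ) * l₁ * ‖d‖ ^ 2 ≤ (K : ℝ) * l₁ * 0 := by simpa using hd
        exact le_of_mul_le_mul_left h1 hKpos
      rw [← norm_eq_zero]
      exact pow_eq_zero_iff two_ne_zero |>.mp (le_antisymm hs0 (sq_nonneg _))
    have hz : (a - b : Fin p → ℝ) = 0 := congrArg WithLp.ofLp (key (WithLp.toLp 2 (a - b)) h0)
    exact sub_eq_zero.mp hz
  have hSunit : IsUnit S := mulVec_injective_iff_isUnit.mp hSinj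
  have hSdet : IsUnit S.det := (Matrix.isUnit_iff_isUnit_det S).mp hSunit
  -- the error decomposition
  set f : Fin K → EuclideanSpace ℝ (Fin p) :=
    fun k => (WithLp.toLp 2 ((Ψ k).mulVec ((β k : Fin p → ℝ) - (β₀ : Fin p → ℝ))) :
      EuclideanSpace ℝ (Fin p)) with hf
  set W : EuclideanSpace ℝ (Fin p) := ∑ k, f k with hW
  have hWsum : (W : Fin p → ℝ)
      = ∑ k, (Ψ k).mulVec ((β k : Fin p → ℝ) - (β₀ : Fin p → ℝ)) := by
    rw [hW, WithLp.ofLp_sum]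
  have hsum : (W : Fin p → ℝ)
      = (∑ k, (Ψ k).mulVec (β k)) - S.mulVec β₀ := by
    rw [hWsum, hS, dse_sum_mulVec, ← Finset.sum_sub_distrib]
    exact Finset.sum_congr rfl fun k _ => mulVec_sub _ _ _
  set x : EuclideanSpace ℝ (Fin p) :=
    (WithLp.toLp 2 (S⁻¹.mulVec (W : Fin p → ℝ)) : EuclideanSpace ℝ (Fin p)) with hx
  have hfun : (βDSE : Fin p → ℝ) - (β₀ : Fin p → ℝ) = S⁻¹.mulVec (W : Fin p → ℝ) := by
    rw [hβDSE, hsum, mulVec_sub, mulVec_mulVec, Matrix.nonsing_inv_mul S hSdet, one_mulVec]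
  have hdecomp : βDSE - β₀ = x := congrArg (WithLp.toLp 2) hfun
  -- bound on the inverse applied to W
  have hSx : S.mulVec (x : Fin p → ℝ) = (W : Fin p → ℝ) := by
    rw [hx, mulVec_mulVec, Matrix.mul_nonsing_inv S hSdet, one_mulVec]
  have hxw : (K : ℝ) * l₁ * ‖x‖ ^ 2 ≤ ‖x‖ * ‖W‖ :=
    calc (K : ℝ) * l₁ * ‖x‖ ^ 2 ≤ (x : Fin p → ℝ) ⬝ᵥ S.mulVec x := hSlow x
      _ = inner ℝ x W := by rw [hSx]; exact dse_dot_eq_inner x W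
      _ ≤ ‖x‖ * ‖W‖ := real_inner_le_norm x W
  have hxbound : ‖x‖ ≤ ‖W‖ / ((K : ℝ) * l₁) := by
    rcases eq_or_lt_of_le (norm_nonneg x) with h0 | h0
    · have hpos : (0 : ℝ) ≤ ‖W‖ / ((K : ℝ) * l₁) := by positivity
      linarith
    · rw [le_div_iff₀ hKpos]
      nlinarith [hxw, h0, mul_pos h0 h0]
  -- bound the norm of W
  set M := Finset.univ.sup' ⟨⟨0, hK⟩, Finset.mem_univ _⟩ (fun k => ‖β k - β₀‖) with hM
  have hM0 : 0 ≤ M := le_trans (norm_nonneg _)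
    (Finset.le_sup' (fun k => ‖β k - β₀‖) (Finset.mem_univ ⟨0, hK⟩))
  have hl₂0 : 0 ≤ l₂ := le_trans (le_of_lt hl₁) hl₁₂
  have hwbound : ‖W‖ ≤ (K : ℝ) * l₂ * M := by
    have h1 : ‖W‖ ≤ ∑ k, ‖f k‖ := by
      rw [hW]; exact norm_sum_le _ f
    have h2 : ∀ k : Fin K, ‖f k‖ ≤ l₂ * M := by
      intro k
      have hb := dse_op_bound (Ψ k) (hΨsymm k) l₂ hl₂0
        (fun v => le_trans (by positivity)
          ((hbd k (WithLp.toLp 2 (v : Fin p → ℝ) : EuclideanSpace ℝ (Fin p))).1))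
        (fun v => (hbd k v).2) (β k - β₀) (f k) rfl
      refine le_trans hb ?_
      have hle : ‖β k - β₀‖ ≤ M :=
        Finset.le_sup' (fun k => ‖β k - β₀‖) (Finset.mem_univ k)
      exact mul_le_mul_of_nonneg_left hle hl₂0
    calc ‖W‖ ≤ ∑ k, ‖f k‖ := h1
      _ ≤ ∑ _k : Fin K, l₂ * M := Finset.sum_le_sum fun k _ => h2 k
      _ = (K : ℝ) * l₂ * M := by simp [mul_assoc]
  rw [hdecomp]
  have hstep : ‖x‖ ≤ ((K : ℝ) * l₂ * M) / ((K : ℝ) * l₁) := by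
    refine le_trans hxbound ?_
    gcongr
  have heq : ((K : ℝ) * l₂ * M) / ((K : ℝ) * l₁) = (l₂ / l₁) * M := by
    have hK0 : (K : ℝ) ≠ 0 := by
      have : (0 : ℝ) < (K : ℝ) := by
        exact_mod_cast Nat.lt_of_lt_of_le Nat.zero_lt_one hK
      exact ne_of_gt this
    field_simp
  rw [← heq]
  exact hstep
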